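/- arXiv:2309.10163 — 2 statements merged into one kernel-verified Lean document; each statement's English description precedes it below -/
import Mathlib

section
/- Fix a nonnegative integer k. Let Q_k ⊂ ℝ^k be the polytope of points (d_1, …, d_k) such that, setting d_0 = 1, one has -1 ≤ d_i - d_{i-1} ≤ 1 and d_{i-1} + d_i ≥ 1 for all i = 1, …, k. Let H_k ⊂ ℝ^k be the central slab of the hypercube, that is, the set of (z_1, …, z_k) with -1 ≤ z_i ≤ 1 for all i and -1 ≤ z_1 + ⋯ + z_k ≤ 1. Then the k-dimensional Lebesgue volumes of Q_k and H_k are equal: Vol(Q_k) = Vol(H_k). -/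
open MeasureTheory Real

/-- Extend a point `(d_1, …, d_k) ∈ ℝ^k` to the sequence `d_0, d_1, …, d_k` with `d_0 = 1`
(values beyond index `k` are junk). -/
def dext (k : ℕ) (d : Fin k → ℝ) : ℕ → ℝ
  | 0 => 1
  | m + 1 => if h : m < k then d ⟨m, h⟩ else 0

/-- The polytope `Q_k` of points `(d_1, …, d_k)` such that, with `d_0 = 1`,
`-1 ≤ d_i - d_{i-1} ≤ 1` and `d_{i-1} + d_i ≥ 1` for all `i = 1, …, k`. -/
def Qset (k : ℕ) : Set (Fin k → ℝ) :=
  {d | ∀ i : Fin k, |dext k d ((i : ℕ) + 1) - dext k d (i : ℕ)| ≤ 1 ∧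
        1 ≤ dext k d (i : ℕ) + dext k d ((i : ℕ) + 1)}

/-- The central slab `H_k = {z ∈ [-1,1]^k : -1 ≤ z_1 + ⋯ + z_k ≤ 1}` of the hypercube. -/
def Hset (k : ℕ) : Set (Fin k → ℝ) :=
  {z | (∀ i : Fin k, z i ∈ Set.Icc (-1 : ℝ) 1) ∧ |∑ i : Fin k, z i| ≤ 1}

open Set
open scoped ENNReal

noncomputable section

/-- like `dext` but with prescribed value `x` at index 0 -/
def dex (k : ℕ) (x : ℝ) (d : Fin k → ℝ) : ℕ → ℝ
  | 0 => x
  | m + 1 => if h : m < k then d ⟨m, h⟩ else 0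

def QS (k : ℕ) (x : ℝ) : Set (Fin k → ℝ) :=
  {d | ∀ i : Fin k, |dex k x d ((i : ℕ) + 1) - dex k x d (i : ℕ)| ≤ 1 ∧
        1 ≤ dex k x d (i : ℕ) + dex k x d ((i : ℕ) + 1)}

def HS (k : ℕ) (x : ℝ) : Set (Fin k → ℝ) :=
  {z | (∀ i : Fin k, z i ∈ Set.Icc (-1 : ℝ) 1) ∧ |x + ∑ i : Fin k, z i| ≤ 1}

def hv (k : ℕ) (x : ℝ) : ℝ≥0∞ := volume (QS k x)
def gv (k : ℕ) (x : ℝ) : ℝ≥0∞ := volume (HS k x)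

lemma measurable_dexP (k m : ℕ) : Measurable (fun p : ℝ × (Fin k → ℝ) => dex k p.1 p.2 m) := by
  match m with
  | 0 => exact measurable_fst
  | m + 1 =>
    by_cases h : m < k
    · simpa [dex, h, Function.comp_def] using (measurable_pi_apply (⟨m, h⟩ : Fin k)).comp measurable_snd
    · simpa [dex, h] using measurable_const

lemma measurableSet_QSP (k : ℕ) :
    MeasurableSet {p : ℝ × (Fin k → ℝ) | p.2 ∈ QS k p.1} := by
  have : {p : ℝ × (Fin k → ℝ) | p.2 ∈ QS k p.1} =
      ⋂ i : Fin k, ({p : ℝ × (Fin k → ℝ) |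
          |dex k p.1 p.2 ((i : ℕ) + 1) - dex k p.1 p.2 (i : ℕ)| ≤ 1} ∩
        {p : ℝ × (Fin k → ℝ) | 1 ≤ dex k p.1 p.2 (i : ℕ) + dex k p.1 p.2 ((i : ℕ) + 1)}) := by
    ext p; simp [QS, forall_and]
  rw [this]
  refine MeasurableSet.iInter fun i => (MeasurableSet.inter ?_ ?_)
  · exact measurableSet_le (((measurable_dexP k _).sub (measurable_dexP k _)).abs)
      measurable_const
  · exact measurableSet_le measurable_const ((measurable_dexP k _).add (measurable_dexP k _))

lemma measurableSet_HSP (k : ℕ) :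
    MeasurableSet {p : ℝ × (Fin k → ℝ) | p.2 ∈ HS k p.1} := by
  have : {p : ℝ × (Fin k → ℝ) | p.2 ∈ HS k p.1} =
      (⋂ i : Fin k, ({p : ℝ × (Fin k → ℝ) | -1 ≤ p.2 i} ∩ {p | p.2 i ≤ 1})) ∩
        {p : ℝ × (Fin k → ℝ) | |p.1 + ∑ i : Fin k, p.2 i| ≤ 1} := by
    ext p; simp [HS, forall_and]
  rw [this]
  refine MeasurableSet.inter (MeasurableSet.iInter fun i => MeasurableSet.inter ?_ ?_) ?_
  · exact measurableSet_le measurable_const (measurable_snd.eval)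
  · exact measurableSet_le (measurable_snd.eval) measurable_const
  · refine measurableSet_le (Measurable.abs (measurable_fst.add ?_)) measurable_const
    exact Finset.measurable_sum _ fun i _ => measurable_snd.eval

lemma measurableSet_QS (k : ℕ) (x : ℝ) : MeasurableSet (QS k x) :=
  (measurableSet_QSP k).preimage measurable_prodMk_left

lemma measurableSet_HS (k : ℕ) (x : ℝ) : MeasurableSet (HS k x) :=
  (measurableSet_HSP k).preimage measurable_prodMk_left

lemma measurable_hv (k : ℕ) : Measurable (hv k) :=
  measurable_measure_prodMk_left (measurableSet_QSP k)

lemma measurable_gv (k : ℕ) : Measurable (gv k) :=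
  measurable_measure_prodMk_left (measurableSet_HSP k)

end
section Cons
open Fin

lemma dex_cons (k : ℕ) (x u : ℝ) (r : Fin k → ℝ) (m : ℕ) :
    dex (k + 1) x (Fin.cons u r) (m + 1) = dex k u r m := by
  match m with
  | 0 => simp [dex]
  | m + 1 =>
    by_cases h : m < k
    · have h' : m + 1 < k + 1 := by omega
      simp only [dex, dif_pos h, dif_pos h']
      have hm : (⟨m + 1, h'⟩ : Fin (k + 1)) = Fin.succ ⟨m, h⟩ := rfl
      rw [hm, Fin.cons_succ]
    · have h' : ¬ (m + 1 < k + 1) := by omega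
      simp [dex, h, h']

lemma mem_QS_cons {k : ℕ} {x u : ℝ} {r : Fin k → ℝ} :
    Fin.cons u r ∈ QS (k + 1) x ↔ ((|u - x| ≤ 1 ∧ 1 ≤ x + u) ∧ r ∈ QS k u) := by
  constructor
  · intro hmem
    refine ⟨?_, fun i => ?_⟩
    · have h0 := hmem 0
      simpa [dex_cons, dex] using h0
    · have hs := hmem i.succ
      simp only [Fin.val_succ] at hs
      simpa [dex_cons] using hs
  · rintro ⟨h0, hr⟩ i
    refine Fin.cases ?_ (fun j => ?_) i
    · simpa [dex_cons, dex] using h0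
    · have := hr j
      simp only [Fin.val_succ]
      simpa [dex_cons] using this

lemma mem_HS_cons {k : ℕ} {x u : ℝ} {r : Fin k → ℝ} :
    Fin.cons u r ∈ HS (k + 1) x ↔ (u ∈ Set.Icc (-1 : ℝ) 1 ∧ r ∈ HS k (x + u)) := by
  unfold HS
  simp only [Set.mem_setOf_eq, Fin.sum_cons, Fin.forall_fin_succ, Fin.cons_zero, Fin.cons_succ]
  constructor
  · rintro ⟨⟨hu, hrest⟩, hsum⟩
    exact ⟨hu, hrest, by rw [add_assoc]; exact hsum⟩
  · rintro ⟨hu, hrest, hsum⟩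
    exact ⟨⟨hu, hrest⟩, by rw [← add_assoc]; exact hsum⟩

end Cons

section Recursion

lemma volume_cons_section (k : ℕ) (S : Set (Fin (k + 1) → ℝ)) (hS : MeasurableSet S) :
    volume S = ∫⁻ u : ℝ, volume {r : Fin k → ℝ | Fin.cons u r ∈ S} := by
  have hmp := volume_preserving_piFinSuccAbove (fun _ : Fin (k + 1) => ℝ) 0
  set e := MeasurableEquiv.piFinSuccAbove (fun _ : Fin (k + 1) => ℝ) 0 with he
  have hT : MeasurableSet (e.symm ⁻¹' S) := e.symm.measurable hS
  have h1 : volume S = (volume : Measure (ℝ × (Fin k → ℝ))) (e.symm ⁻¹' S) := by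
    rw [← hmp.measure_preimage hT.nullMeasurableSet]
    congr 1
    ext d
    simp
  rw [h1, Measure.volume_eq_prod, Measure.prod_apply hT]
  congr 1
  ext u
  congr 1
  ext r
  simp only [Set.mem_preimage, Set.mem_setOf_eq]
  have : e.symm (u, r) = Fin.cons u r := by
    simp [he, MeasurableEquiv.piFinSuccAbove_symm_apply, Fin.insertNthEquiv, Fin.insertNth_zero']
  rw [this]

lemma hv_succ (k : ℕ) (x : ℝ) :
    hv (k + 1) x = ∫⁻ u in Set.Ioc (max (x - 1) (1 - x)) (x + 1), hv k u := by
  rw [hv, volume_cons_section k _ (measurableSet_QS (k + 1) x)]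
  have h1 : (fun u : ℝ => volume {r : Fin k → ℝ | Fin.cons u r ∈ QS (k + 1) x}) =
      (Set.Icc (max (x - 1) (1 - x)) (x + 1)).indicator (hv k) := by
    funext u
    by_cases hu : u ∈ Set.Icc (max (x - 1) (1 - x)) (x + 1)
    · rw [Set.indicator_of_mem hu]
      rw [Set.mem_Icc, max_le_iff] at hu
      have : {r : Fin k → ℝ | Fin.cons u r ∈ QS (k + 1) x} = QS k u := by
        ext r
        rw [Set.mem_setOf_eq, mem_QS_cons, and_iff_right_iff_imp]
        intro _
        rw [abs_le]
        constructor
        · constructor <;> linarith [hu.1.1, hu.1.2, hu.2]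
        · linarith [hu.1.2]
      rw [this]; rfl
    · rw [Set.indicator_of_notMem hu]
      have : {r : Fin k → ℝ | Fin.cons u r ∈ QS (k + 1) x} = (∅ : Set (Fin k → ℝ)) := by
        ext r
        rw [Set.mem_setOf_eq, mem_QS_cons]
        simp only [Set.mem_empty_iff_false, iff_false]
        rintro ⟨⟨habs, hsum⟩, -⟩
        rw [abs_le] at habs
        rw [Set.mem_Icc, max_le_iff] at hu
        push_neg at hu
        rcases le_or_gt (max (x - 1) (1 - x)) u with h | h
        · rw [max_le_iff] at h
          have := hu ⟨h.1, h.2⟩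
          linarith [habs.2]
        · rw [lt_max_iff] at h
          rcases h with h | h <;> linarith [habs.1, hsum]
      simp [this]
  rw [h1, lintegral_indicator measurableSet_Icc,
    Measure.restrict_congr_set Ioc_ae_eq_Icc]

lemma gv_succ (k : ℕ) (x : ℝ) :
    gv (k + 1) x = ∫⁻ u in Set.Ioc (-1 : ℝ) 1, gv k (x + u) := by
  rw [gv, volume_cons_section k _ (measurableSet_HS (k + 1) x)]
  have h1 : (fun u : ℝ => volume {r : Fin k → ℝ | Fin.cons u r ∈ HS (k + 1) x}) =
      (Set.Icc (-1 : ℝ) 1).indicator (fun u => gv k (x + u)) := by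
    funext u
    by_cases hu : u ∈ Set.Icc (-1 : ℝ) 1
    · rw [Set.indicator_of_mem hu]
      have : {r : Fin k → ℝ | Fin.cons u r ∈ HS (k + 1) x} = HS k (x + u) := by
        ext r
        rw [Set.mem_setOf_eq, mem_HS_cons, and_iff_right_iff_imp]
        exact fun _ => hu
      rw [this]; rfl
    · rw [Set.indicator_of_notMem hu]
      have : {r : Fin k → ℝ | Fin.cons u r ∈ HS (k + 1) x} = (∅ : Set (Fin k → ℝ)) := by
        ext r
        rw [Set.mem_setOf_eq, mem_HS_cons]
        simp only [Set.mem_empty_iff_false, iff_false]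
        rintro ⟨h, -⟩
        exact hu h
      simp [this]
  rw [h1, lintegral_indicator measurableSet_Icc,
    Measure.restrict_congr_set Ioc_ae_eq_Icc]

end Recursion
section Toolkit

/-- interval lintegral over `Ioc a b` -/
noncomputable def Iv (a b : ℝ) (f : ℝ → ℝ≥0∞) : ℝ≥0∞ := ∫⁻ u in Set.Ioc a b, f u

lemma Iv_split {a b c : ℝ} (f : ℝ → ℝ≥0∞) (hf : Measurable f) (hab : a ≤ b) (hbc : b ≤ c) :
    Iv a b f + Iv b c f = Iv a c f := by
  unfold Iv
  rw [← lintegral_union measurableSet_Ioc (Set.Ioc_disjoint_Ioc_of_le le_rfl),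
    Set.Ioc_union_Ioc_eq_Ioc hab hbc]

lemma Iv_shift (a b c : ℝ) (f : ℝ → ℝ≥0∞) (hf : Measurable f) :
    Iv a b (fun u => f (u + c)) = Iv (a + c) (b + c) f := by
  unfold Iv
  have hmp : MeasurePreserving (fun u : ℝ => u + c) volume volume :=
    measurePreserving_add_right volume c
  have hemb : MeasurableEmbedding (fun u : ℝ => u + c) :=
    (MeasurableEquiv.addRight c).measurableEmbedding
  have heq := hmp.setLIntegral_comp_preimage_emb hemb f (Set.Ioc (a + c) (b + c))
  have hset : (fun u : ℝ => u + c) ⁻¹' Set.Ioc (a + c) (b + c) = Set.Ioc a b := by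
    ext u
    simp only [Set.mem_preimage, Set.mem_Ioc]
    constructor <;> intro h <;> constructor <;> linarith [h.1, h.2]
  rw [← heq, hset]

lemma Iv_reflect (a b c : ℝ) (f : ℝ → ℝ≥0∞) (hf : Measurable f) :
    Iv a b (fun u => f (c - u)) = Iv (c - b) (c - a) f := by
  unfold Iv
  have hmp : MeasurePreserving (fun u : ℝ => c - u) volume volume :=
    Measure.measurePreserving_sub_left volume c
  have hemb : MeasurableEmbedding (fun u : ℝ => c - u) :=
    (MeasurableEquiv.subLeft c).measurableEmbedding
  have heq := hmp.setLIntegral_comp_preimage_emb hemb f (Set.Ioc (c - b) (c - a))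
  rw [← heq]
  have hset : (fun u : ℝ => c - u) ⁻¹' Set.Ioc (c - b) (c - a) = Set.Ico a b := by
    ext u
    simp only [Set.mem_preimage, Set.mem_Ioc, Set.mem_Ico]
    constructor <;> intro h <;> constructor <;> linarith [h.1, h.2]
  rw [hset, Measure.restrict_congr_set Ico_ae_eq_Ioc]

lemma Iv_add (a b : ℝ) (f g : ℝ → ℝ≥0∞) (hf : Measurable f) :
    Iv a b (fun u => f u + g u) = Iv a b f + Iv a b g := by
  unfold Iv
  exact lintegral_add_left hf _

lemma Iv_congr {a b : ℝ} {f g : ℝ → ℝ≥0∞} (h : ∀ u, a < u → u ≤ b → f u = g u) :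
    Iv a b f = Iv a b g := by
  unfold Iv
  refine setLIntegral_congr_fun measurableSet_Ioc ?_
  intro u hu
  exact h u hu.1 hu.2

lemma Iv_le (a b : ℝ) (f : ℝ → ℝ≥0∞) (C : ℝ≥0∞) (h : ∀ u, f u ≤ C) :
    Iv a b f ≤ C * ENNReal.ofReal (b - a) := by
  calc Iv a b f ≤ ∫⁻ _ in Set.Ioc a b, C := setLIntegral_mono' measurableSet_Ioc fun u _ => h u
  _ = C * ENNReal.ofReal (b - a) := by
      rw [setLIntegral_const, Real.volume_Ioc]

end Toolkit
section Basic

lemma hv_zero (x : ℝ) : hv 0 x = 1 := by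
  have : QS 0 x = Set.univ := by
    ext d; simp [QS]
  rw [hv, this]
  rw [MeasureTheory.volume_pi, Measure.pi_univ]
  simp

lemma gv_zero (x : ℝ) : gv 0 x = if |x| ≤ 1 then 1 else 0 := by
  by_cases hx : |x| ≤ 1
  · have : HS 0 x = Set.univ := by
      ext z; simp [HS, hx]
    rw [gv, this, if_pos hx]
    rw [MeasureTheory.volume_pi, Measure.pi_univ]
    simp
  · have : HS 0 x = ∅ := by
      ext z; simp [HS, hx]
    rw [gv, this, if_neg hx]
    simp

lemma hv_succ' (k : ℕ) (x : ℝ) :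
    hv (k + 1) x = Iv (max (x - 1) (1 - x)) (x + 1) (hv k) := hv_succ k x

lemma gv_succ' (k : ℕ) (x : ℝ) :
    gv (k + 1) x = Iv (x - 1) (x + 1) (gv k) := by
  rw [gv_succ]
  have h1 : (∫⁻ u in Set.Ioc (-1 : ℝ) 1, gv k (x + u)) =
      Iv (-1) 1 (fun u => gv k (u + x)) := by
    unfold Iv
    congr 1
    funext u
    rw [add_comm]
  rw [h1, Iv_shift _ _ _ _ (measurable_gv k)]
  congr 1 <;> ring

lemma hv_le (k : ℕ) : ∀ x, hv k x ≤ 2 ^ k := by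
  induction k with
  | zero => intro x; simp [hv_zero]
  | succ k ih =>
    intro x
    rw [hv_succ']
    calc Iv (max (x - 1) (1 - x)) (x + 1) (hv k)
        ≤ (2 ^ k) * ENNReal.ofReal (x + 1 - max (x - 1) (1 - x)) := Iv_le _ _ _ _ ih
      _ ≤ (2 ^ k) * ENNReal.ofReal 2 := by
          gcongr
          have : x - 1 ≤ max (x - 1) (1 - x) := le_max_left _ _
          linarith
      _ = 2 ^ (k + 1) := by
          rw [show ((2 : ℝ≥0∞) ^ (k+1)) = 2 ^ k * 2 by ring]
          congr 1
          norm_num [ENNReal.ofReal_ofNat]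

lemma hv_ne_top (k : ℕ) (x : ℝ) : hv k x ≠ ⊤ :=
  ne_top_of_le_ne_top (by simp) (hv_le k x)

lemma Iv_hv_ne_top (k : ℕ) (a b : ℝ) : Iv a b (hv k) ≠ ⊤ := by
  refine ne_top_of_le_ne_top ?_ (Iv_le a b _ _ (hv_le k))
  exact ENNReal.mul_ne_top (by simp) ENNReal.ofReal_ne_top

lemma gv_even (k : ℕ) : ∀ x : ℝ, gv k (-x) = gv k x := by
  induction k with
  | zero => intro x; rw [gv_zero, gv_zero, abs_neg]
  | succ k ih =>
    intro x
    rw [gv_succ', gv_succ']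
    have h1 : Iv (x - 1) (x + 1) (gv k) = Iv (x - 1) (x + 1) (fun u => gv k (0 - u)) := by
      refine Iv_congr fun u _ _ => ?_
      rw [show (0 : ℝ) - u = -u by ring, ih]
    rw [h1, Iv_reflect _ _ _ _ (measurable_gv k)]
    congr 1 <;> ring

end Basic
section Main

lemma measurable_tg (k : ℕ) : Measurable (fun u => gv k u + gv k u) :=
  (measurable_gv k).add (measurable_gv k)

lemma measurable_hv_shift (k : ℕ) (c : ℝ) : Measurable (fun u => hv k (u + c)) :=
  (measurable_hv k).comp (measurable_add_const c)

/-- symmetric version of claim A -/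
lemma Aprime {k : ℕ}
    (hA : ∀ x : ℝ, 0 ≤ x → x ≤ 1 → hv k (1 + x) + hv k (1 - x) = gv k x + gv k x) :
    ∀ u : ℝ, -1 ≤ u → u ≤ 1 → gv k u + gv k u = hv k (u + 1) + hv k (1 - u) := by
  intro u hu1 hu2
  rcases le_or_gt 0 u with h | h
  · rw [show u + 1 = 1 + u by ring, hA u h hu2]
  · have hge := gv_even k (-u)
    rw [neg_neg] at hge
    rw [hge, ← hA (-u) (by linarith) (by linarith),
      show 1 + -u = 1 - u by ring, show 1 - -u = u + 1 by ring, add_comm]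

lemma S1 {k : ℕ}
    (hA : ∀ x : ℝ, 0 ≤ x → x ≤ 1 → hv k (1 + x) + hv k (1 - x) = gv k x + gv k x)
    (x : ℝ) (hx : 0 ≤ x) :
    Iv (x - 1) 1 (fun u => gv k u + gv k u) = Iv x 2 (hv k) + Iv 0 (2 - x) (hv k) := by
  have step1 : Iv (x - 1) 1 (fun u => gv k u + gv k u) =
      Iv (x - 1) 1 (fun u => hv k (u + 1) + hv k (1 - u)) :=
    Iv_congr fun u hu1 hu2 => Aprime hA u (by linarith) hu2
  rw [step1, Iv_add _ _ _ _ (measurable_hv_shift k 1),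
    Iv_shift _ _ _ _ (measurable_hv k), Iv_reflect _ _ _ _ (measurable_hv k)]
  congr 1
  · congr 1 <;> ring
  · congr 1 <;> ring

lemma S2 {k : ℕ}
    (hB : ∀ x : ℝ, 1 < x → hv k (x + 1) = (gv k x + gv k x) + hv k (x - 1))
    (x : ℝ) :
    Iv 1 (x + 1) (fun u => gv k u + gv k u) + Iv 0 x (hv k) = Iv 2 (x + 2) (hv k) := by
  have step1 : Iv 1 (x + 1) (fun u => hv k (u + 1)) =
      Iv 1 (x + 1) (fun u => (gv k u + gv k u) + hv k (u - 1)) :=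
    Iv_congr fun u hu1 _ => hB u hu1
  have step2 : Iv 1 (x + 1) (fun u => (gv k u + gv k u) + hv k (u - 1)) =
      Iv 1 (x + 1) (fun u => gv k u + gv k u) + Iv 1 (x + 1) (fun u => hv k (u - 1)) :=
    Iv_add _ _ _ _ (measurable_tg k)
  have e1 : Iv 1 (x + 1) (fun u => hv k (u + 1)) = Iv 2 (x + 2) (hv k) := by
    rw [Iv_shift _ _ _ _ (measurable_hv k)]
    congr 1 <;> ring
  have e2 : Iv 1 (x + 1) (fun u => hv k (u - 1)) = Iv 0 x (hv k) := by
    have : (fun u : ℝ => hv k (u - 1)) = (fun u : ℝ => hv k (u + (-1))) := by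
      funext u; rw [sub_eq_add_neg]
    rw [this, Iv_shift _ _ _ _ (measurable_hv k)]
    congr 1 <;> ring
  rw [← e1, step1, step2, e2]

theorem claimAB (k : ℕ) :
    (∀ x : ℝ, 0 ≤ x → x ≤ 1 → hv k (1 + x) + hv k (1 - x) = gv k x + gv k x) ∧
    (∀ x : ℝ, 1 < x → hv k (x + 1) = (gv k x + gv k x) + hv k (x - 1)) := by
  induction k with
  | zero =>
    constructor
    · intro x h0 h1
      rw [hv_zero, hv_zero, gv_zero, if_pos (by rw [abs_le]; constructor <;> linarith)]
    · intro x hx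
      rw [hv_zero, hv_zero, gv_zero, if_neg (by rw [abs_le]; push_neg; intro h; linarith)]
      simp
  | succ k ih =>
    obtain ⟨hA, hB⟩ := ih
    constructor
    · -- claim A for k+1
      intro x h0 h1
      rw [hv_succ', hv_succ', gv_succ']
      have m1 : max (1 + x - 1) (1 - (1 + x)) = x := by
        rw [show 1 + x - 1 = x by ring, show 1 - (1 + x) = -x by ring,
          max_eq_left (by linarith)]
      have m2 : max (1 - x - 1) (1 - (1 - x)) = x := by
        rw [show 1 - x - 1 = -x by ring, show 1 - (1 - x) = x by ring,
          max_eq_right (by linarith)]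
      rw [m1, m2, show 1 + x + 1 = x + 2 by ring, show 1 - x + 1 = 2 - x by ring]
      -- goal : Iv x (x+2) h + Iv x (2-x) h = Iv (x-1) (x+1) g + Iv (x-1) (x+1) g
      rw [← Iv_add _ _ _ _ (measurable_gv k)]
      rw [← Iv_split (fun u => gv k u + gv k u) (measurable_tg k)
        (by linarith : x - 1 ≤ 1) (by linarith : (1:ℝ) ≤ x + 1)]
      rw [S1 hA x h0]
      -- goal : Iv x (x+2) h + Iv x (2-x) h
      --      = (Iv x 2 h + Iv 0 (2-x) h) + Iv 1 (x+1) tg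
      have hC : Iv 0 x (hv k) ≠ ⊤ := Iv_hv_ne_top k 0 x
      rw [← ENNReal.add_left_inj hC]
      have lhs_eq : Iv x (x + 2) (hv k) + Iv x (2 - x) (hv k) + Iv 0 x (hv k)
          = (Iv x 2 (hv k) + Iv 2 (x + 2) (hv k)) + Iv 0 (2 - x) (hv k) := by
        rw [← Iv_split (hv k) (measurable_hv k) (by linarith : x ≤ 2)
          (by linarith : (2:ℝ) ≤ x + 2),
          ← Iv_split (hv k) (measurable_hv k) (by linarith : (0:ℝ) ≤ x)
          (by linarith : x ≤ 2 - x)]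
        ring
      have rhs_eq : Iv x 2 (hv k) + Iv 0 (2 - x) (hv k) +
            Iv 1 (x + 1) (fun u => gv k u + gv k u) + Iv 0 x (hv k)
          = (Iv x 2 (hv k) + Iv 2 (x + 2) (hv k)) + Iv 0 (2 - x) (hv k) := by
        rw [add_assoc (Iv x 2 (hv k) + Iv 0 (2 - x) (hv k)), S2 hB x]
        ring
      rw [lhs_eq, rhs_eq]
    · -- claim B for k+1
      intro x hx
      rw [hv_succ', hv_succ', gv_succ']
      have m1 : max (x + 1 - 1) (1 - (x + 1)) = x := by
        rw [show x + 1 - 1 = x by ring, show 1 - (x + 1) = -x by ring,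
          max_eq_left (by linarith)]
      rw [m1, show x + 1 + 1 = x + 2 by ring]
      rw [← Iv_add _ _ _ _ (measurable_gv k)]
      rcases le_total 2 x with h2 | h2
      · -- x ≥ 2
        have m2 : max (x - 1 - 1) (1 - (x - 1)) = x - 2 := by
          rw [show x - 1 - 1 = x - 2 by ring, show 1 - (x - 1) = 2 - x by ring,
            max_eq_left (by linarith)]
        rw [m2, show x - 1 + 1 = x by ring]
        -- goal : Iv x (x+2) h = Iv (x-1) (x+1) tg + Iv (x-2) x h
        have step1 : Iv (x - 1) (x + 1) (fun u => hv k (u + 1)) =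
            Iv (x - 1) (x + 1) (fun u => (gv k u + gv k u) + hv k (u - 1)) :=
          Iv_congr fun u hu1 _ => hB u (by linarith)
        have step2 : Iv (x - 1) (x + 1) (fun u => (gv k u + gv k u) + hv k (u - 1)) =
            Iv (x - 1) (x + 1) (fun u => gv k u + gv k u) +
              Iv (x - 1) (x + 1) (fun u => hv k (u - 1)) :=
          Iv_add _ _ _ _ (measurable_tg k)
        have e1 : Iv (x - 1) (x + 1) (fun u => hv k (u + 1)) = Iv x (x + 2) (hv k) := by
          rw [Iv_shift _ _ _ _ (measurable_hv k)]
          congr 1 <;> ring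
        have e2 : Iv (x - 1) (x + 1) (fun u => hv k (u - 1)) = Iv (x - 2) x (hv k) := by
          have : (fun u : ℝ => hv k (u - 1)) = (fun u : ℝ => hv k (u + (-1))) := by
            funext u; rw [sub_eq_add_neg]
          rw [this, Iv_shift _ _ _ _ (measurable_hv k)]
          congr 1 <;> ring
        rw [← e1, step1, step2, e2]
      · -- 1 < x ≤ 2
        have m2 : max (x - 1 - 1) (1 - (x - 1)) = 2 - x := by
          rw [show x - 1 - 1 = x - 2 by ring, show 1 - (x - 1) = 2 - x by ring,
            max_eq_right (by linarith)]
        rw [m2, show x - 1 + 1 = x by ring]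
        -- goal : Iv x (x+2) h = Iv (x-1) (x+1) tg + Iv (2-x) x h
        rw [← Iv_split (fun u => gv k u + gv k u) (measurable_tg k)
          (by linarith : x - 1 ≤ 1) (by linarith : (1:ℝ) ≤ x + 1),
          S1 hA x (by linarith)]
        -- RHS = (Iv x 2 h + Iv 0 (2-x) h) + Iv 1 (x+1) tg + Iv (2-x) x h
        have comb1 : Iv 0 (2 - x) (hv k) + Iv (2 - x) x (hv k) = Iv 0 x (hv k) :=
          Iv_split (hv k) (measurable_hv k) (by linarith) (by linarith)
        have comb2 : Iv x 2 (hv k) + Iv 2 (x + 2) (hv k) = Iv x (x + 2) (hv k) :=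
          Iv_split (hv k) (measurable_hv k) (by linarith) (by linarith)
        calc Iv x (x + 2) (hv k)
            = Iv x 2 (hv k) + Iv 2 (x + 2) (hv k) := comb2.symm
          _ = Iv x 2 (hv k) + (Iv 1 (x + 1) (fun u => gv k u + gv k u) + Iv 0 x (hv k)) := by
              rw [S2 hB x]
          _ = Iv x 2 (hv k) + (Iv 1 (x + 1) (fun u => gv k u + gv k u) +
                (Iv 0 (2 - x) (hv k) + Iv (2 - x) x (hv k))) := by rw [comb1]
          _ = Iv x 2 (hv k) + Iv 0 (2 - x) (hv k) +
                Iv 1 (x + 1) (fun u => gv k u + gv k u) + Iv (2 - x) x (hv k) := by ring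
end Main

lemma Qset_eq (k : ℕ) : Qset k = QS k 1 := by
  have hd : ∀ d : Fin k → ℝ, dext k d = dex k 1 d := by
    intro d; funext n; cases n <;> rfl
  ext d
  unfold Qset QS
  rw [Set.mem_setOf_eq, Set.mem_setOf_eq, hd d]

lemma Hset_eq (k : ℕ) : Hset k = HS k 0 := by
  ext z
  unfold Hset HS
  rw [Set.mem_setOf_eq, Set.mem_setOf_eq, zero_add]


/-- The `k`-dimensional Lebesgue volumes of `Q_k` and `H_k` coincide. -/
theorem volume_Qset_eq_volume_Hset (k : ℕ) :
    volume (Qset k) = volume (Hset k) := by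
  rw [Qset_eq, Hset_eq]
  show hv k 1 = gv k 0
  have h := (claimAB k).1 0 le_rfl zero_le_one
  rw [show (1:ℝ) + 0 = 1 by ring, show (1:ℝ) - 0 = 1 by ring] at h
  have ha : hv k 1 ≠ ⊤ := hv_ne_top k 1
  have hb : gv k 0 ≠ ⊤ := by
    intro htop
    have hfin : hv k 1 + hv k 1 ≠ ⊤ := ENNReal.add_ne_top.mpr ⟨ha, ha⟩
    rw [h, htop] at hfin
    simp at hfin
  have := congrArg ENNReal.toReal h
  rw [ENNReal.toReal_add ha ha, ENNReal.toReal_add hb hb] at this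
  have heq : (hv k 1).toReal = (gv k 0).toReal := by linarith
  exact (ENNReal.toReal_eq_toReal_iff' ha hb).mp heq
end

section
/- As k → ∞, (2/π)·∫_0^∞ sinc^{k+1}(t) dt = √(6/(πk)) + O(k^{-3/2}); that is, there exist constants C > 0 and K such that for all k ≥ K, |(2/π)·∫_0^∞ sinc^{k+1}(t) dt − √(6/(πk))| ≤ C·k^{-3/2}. -/
open MeasureTheory Real

/-- `_root_.sinc t = sin t / t` for `t ≠ 0`, with `_root_.sinc 0 = 1`. -/
noncomputable def sinc (t : ℝ) : ℝ := if t = 0 then 1 else Real.sin t / t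

lemma mono_aux {f g : ℝ → ℝ} (hf : ∀ x, HasDerivAt f (g x) x)
    (hg : ∀ x, 0 ≤ x → 0 ≤ g x) {x : ℝ} (hx : 0 ≤ x) : f 0 ≤ f x := by
  have hmono : MonotoneOn f (Set.Ici 0) := by
    refine monotoneOn_of_deriv_nonneg (convex_Ici 0)
      (fun t _ => (hf t).continuousAt.continuousWithinAt)
      (fun t _ => (hf t).differentiableAt.differentiableWithinAt) ?_
    intro t ht
    rw [interior_Ici] at ht
    rw [(hf t).deriv]
    exact hg t ht.le
  exact hmono Set.self_mem_Ici hx hx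

lemma sin_ge_cubic (t : ℝ) (ht : 0 ≤ t) : t - t ^ 3 / 6 ≤ Real.sin t := by
  have h := mono_aux (f := fun x => Real.sin x - (x - x ^ 3 / 6))
    (g := fun x => Real.cos x - (1 - x ^ 2 / 2)) ?_ ?_ ht
  · simpa using h
  · intro x
    have h1 : HasDerivAt (fun x : ℝ => x - x ^ 3 / 6) (1 - 3 * x ^ 2 / 6) x := by
      exact ((hasDerivAt_id x).sub ((hasDerivAt_pow 3 x).div_const 6)).congr_deriv (by norm_num)
    have := (Real.hasDerivAt_sin x).sub h1
    exact this.congr_deriv (by ring)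
  · intro x _
    have := Real.one_sub_sq_div_two_le_cos (x := x)
    linarith

lemma cos_le_quartic (t : ℝ) (ht : 0 ≤ t) : Real.cos t ≤ 1 - t ^ 2 / 2 + t ^ 4 / 24 := by
  have h := mono_aux (f := fun x => (1 - x ^ 2 / 2 + x ^ 4 / 24) - Real.cos x)
    (g := fun x => -(x - x ^ 3 / 6) + Real.sin x) ?_ ?_ ht
  · simpa using h
  · intro x
    have h1 : HasDerivAt (fun x : ℝ => 1 - x ^ 2 / 2 + x ^ 4 / 24)
        (-(2 * x / 2) + 4 * x ^ 3 / 24) x := by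
      exact (((hasDerivAt_const x (1:ℝ)).sub ((hasDerivAt_pow 2 x).div_const 2)).add
        ((hasDerivAt_pow 4 x).div_const 24)).congr_deriv (by norm_num)
    have := h1.sub (Real.hasDerivAt_cos x)
    exact this.congr_deriv (by ring)
  · intro x hx
    have := sin_ge_cubic x hx
    linarith

lemma sin_le_quintic (t : ℝ) (ht : 0 ≤ t) :
    Real.sin t ≤ t - t ^ 3 / 6 + t ^ 5 / 120 := by
  have h := mono_aux (f := fun x => (x - x ^ 3 / 6 + x ^ 5 / 120) - Real.sin x)
    (g := fun x => (1 - x ^ 2 / 2 + x ^ 4 / 24) - Real.cos x) ?_ ?_ ht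
  · simpa using h
  · intro x
    have h1 : HasDerivAt (fun x : ℝ => x - x ^ 3 / 6 + x ^ 5 / 120)
        ((1 - 3 * x ^ 2 / 6) + 5 * x ^ 4 / 120) x := by
      exact (((hasDerivAt_id x).sub ((hasDerivAt_pow 3 x).div_const 6)).add
        ((hasDerivAt_pow 5 x).div_const 120)).congr_deriv (by norm_num)
    have := h1.sub (Real.hasDerivAt_sin x)
    exact this.congr_deriv (by ring)
  · intro x hx
    have := cos_le_quartic x hx
    linarith

lemma hasDerivAt_exp_neg (x : ℝ) : HasDerivAt (fun y : ℝ => Real.exp (-y)) (-Real.exp (-x)) x := by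
  simpa [Function.comp_def] using (Real.hasDerivAt_exp (-x)).comp x (hasDerivAt_neg x)

lemma exp_neg_le_quad (x : ℝ) (hx : 0 ≤ x) : Real.exp (-x) ≤ 1 - x + x ^ 2 / 2 := by
  have h := mono_aux (f := fun y => (1 - y + y ^ 2 / 2) - Real.exp (-y))
    (g := fun y => (-1 + y) + Real.exp (-y)) ?_ ?_ hx
  · simpa using h
  · intro y
    have h1 : HasDerivAt (fun y : ℝ => 1 - y + y ^ 2 / 2) (-1 + 2 * y / 2) y := by
      exact (((hasDerivAt_const y (1:ℝ)).sub (hasDerivAt_id y)).add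
        ((hasDerivAt_pow 2 y).div_const 2)).congr_deriv (by norm_num)
    have := h1.sub (hasDerivAt_exp_neg y)
    exact this.congr_deriv (by ring)
  · intro y _
    have := Real.add_one_le_exp (-y)
    linarith

lemma exp_neg_ge_cubic (x : ℝ) (hx : 0 ≤ x) :
    1 - x + x ^ 2 / 2 - x ^ 3 / 6 ≤ Real.exp (-x) := by
  have h := mono_aux (f := fun y => Real.exp (-y) - (1 - y + y ^ 2 / 2 - y ^ 3 / 6))
    (g := fun y => (1 - y + y ^ 2 / 2) - Real.exp (-y)) ?_ ?_ hx
  · simpa using h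
  · intro y
    have h1 : HasDerivAt (fun y : ℝ => 1 - y + y ^ 2 / 2 - y ^ 3 / 6)
        ((-1 + 2 * y / 2) - 3 * y ^ 2 / 6) y := by
      exact ((((hasDerivAt_const y (1:ℝ)).sub (hasDerivAt_id y)).add
        ((hasDerivAt_pow 2 y).div_const 2)).sub ((hasDerivAt_pow 3 y).div_const 6)).congr_deriv (by norm_num)
    have := (hasDerivAt_exp_neg y).sub h1
    exact this.congr_deriv (by ring)
  · intro y hy
    exact sub_nonneg.2 (exp_neg_le_quad y hy)

lemma quad_le_exp (x : ℝ) (hx : 0 ≤ x) : 1 + x + x ^ 2 / 2 ≤ Real.exp x := by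
  have h := mono_aux (f := fun y => Real.exp y - (1 + y + y ^ 2 / 2))
    (g := fun y => Real.exp y - (1 + y)) ?_ ?_ hx
  · simpa using h
  · intro y
    have h1 : HasDerivAt (fun y : ℝ => 1 + y + y ^ 2 / 2) (1 + 2 * y / 2) y := by
      exact (((hasDerivAt_const y (1:ℝ)).add (hasDerivAt_id y)).add
        ((hasDerivAt_pow 2 y).div_const 2)).congr_deriv (by norm_num)
    have := (Real.hasDerivAt_exp y).sub h1
    exact this.congr_deriv (by ring)
  · intro y _
    have := Real.add_one_le_exp y
    linarith

lemma sq_le_exp (x : ℝ) (hx : 0 ≤ x) : x ^ 2 ≤ Real.exp x := by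
  have h := mono_aux (f := fun y => Real.exp y - y ^ 2)
    (g := fun y => Real.exp y - 2 * y) ?_ ?_ hx
  · simp only [Real.exp_zero] at h
    norm_num at h
    linarith
  · intro y
    have h1 : HasDerivAt (fun y : ℝ => y ^ 2) (2 * y) y := by
      simpa using (hasDerivAt_pow 2 y)
    exact (Real.hasDerivAt_exp y).sub h1
  · intro y hy
    have := quad_le_exp y hy
    nlinarith [sq_nonneg (y - 1)]

lemma measurable_sinc : Measurable _root_.sinc :=
  Measurable.ite (measurableSet_eq) measurable_const (Real.measurable_sin.div measurable_id)

lemma sinc_of_ne (t : ℝ) (ht : t ≠ 0) : _root_.sinc t = Real.sin t / t := if_neg ht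

lemma abs_sinc_le_one (t : ℝ) : |_root_.sinc t| ≤ 1 := by
  unfold _root_.sinc
  split_ifs with h
  · norm_num
  · rw [abs_div]
    rw [div_le_one (abs_pos.2 h)]
    exact Real.abs_sin_le_abs

lemma abs_sinc_le_inv (t : ℝ) (ht : 0 < t) : |_root_.sinc t| ≤ 1 / t := by
  rw [_root_.sinc_of_ne t ht.ne', abs_div, abs_of_pos ht]
  gcongr
  exact Real.abs_sin_le_one t

lemma sinc_nonneg (t : ℝ) (h0 : 0 ≤ t) (hπ : t ≤ π) : 0 ≤ _root_.sinc t := by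
  unfold _root_.sinc
  split_ifs with h
  · norm_num
  · exact div_nonneg (Real.sin_nonneg_of_nonneg_of_le_pi h0 hπ) h0

lemma sinc_le_gauss (t : ℝ) (h0 : 0 ≤ t) (h1 : t ≤ 1) : _root_.sinc t ≤ Real.exp (-(t ^ 2 / 6)) := by
  rcases eq_or_lt_of_le h0 with rfl | ht
  · simp [_root_.sinc]
  · rw [_root_.sinc_of_ne t ht.ne', div_le_iff₀ ht]
    have hs := sin_le_quintic t h0
    have he := exp_neg_ge_cubic (t ^ 2 / 6) (by positivity)
    have h2 : t ^ 2 ≤ 1 := by nlinarith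
    have hEt := mul_le_mul_of_nonneg_right he ht.le
    have hq : 0 ≤ t ^ 5 * (1 / 180 - t ^ 2 / 1296) :=
      mul_nonneg (pow_nonneg h0 5) (by nlinarith)
    nlinarith [hEt, hq]

lemma gauss_le_sinc (t : ℝ) (h0 : 0 ≤ t) (h1 : t ≤ 1) :
    Real.exp (-(t ^ 2 / 6)) * (1 - t ^ 4 / 50) ≤ _root_.sinc t := by
  rcases eq_or_lt_of_le h0 with rfl | ht
  · simp [_root_.sinc]
  · rw [_root_.sinc_of_ne t ht.ne', le_div_iff₀ ht]
    have hs := sin_ge_cubic t h0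
    have he := exp_neg_le_quad (t ^ 2 / 6) (by positivity)
    have h2 : t ^ 2 ≤ 1 := by nlinarith
    have h4 : 0 ≤ 1 - t ^ 4 / 50 := by nlinarith
    have key : Real.exp (-(t ^ 2 / 6)) * (1 - t ^ 4 / 50) ≤ 1 - t ^ 2 / 6 := by
      have step : Real.exp (-(t ^ 2 / 6)) * (1 - t ^ 4 / 50) ≤
          (1 - t ^ 2 / 6 + (t ^ 2 / 6) ^ 2 / 2) * (1 - t ^ 4 / 50) :=
        mul_le_mul_of_nonneg_right he h4
      nlinarith [step]
    nlinarith [key, mul_pos ht ht]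

lemma sinc_le_const (t : ℝ) (h1 : 1 ≤ t) (hπ : t ≤ π) : _root_.sinc t ≤ 101 / 120 := by
  have ht : (0:ℝ) < t := lt_of_lt_of_le one_pos h1
  rw [_root_.sinc_of_ne t ht.ne', div_le_iff₀ ht]
  have hs := sin_le_quintic t ht.le
  have h2 : t ^ 2 ≤ 9.9225 := by nlinarith [Real.pi_lt_d2]
  nlinarith [mul_nonneg (mul_nonneg ht.le (sub_nonneg.2 (show 1 ≤ t^2 by nlinarith)))
    (show 0 ≤ 19 - t^2 by nlinarith)]

lemma geom_small {r : ℝ} (h0 : 0 ≤ r) (h1 : r < 1) :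
    ∃ C > (0:ℝ), ∀ n : ℕ, 1 ≤ n → r ^ n ≤ C / (n : ℝ) ^ 2 := by
  rcases eq_or_lt_of_le h0 with rfl | hr
  · exact ⟨1, one_pos, fun n hn => by rw [zero_pow (by omega)]; positivity⟩
  set s := Real.sqrt r with hs
  have hs0 : 0 < s := Real.sqrt_pos.2 hr
  have hs1 : s < 1 := by
    rw [show (1:ℝ) = Real.sqrt 1 by rw [Real.sqrt_one]]
    exact Real.sqrt_lt_sqrt h0 h1
  have hems : (0:ℝ) < 1 - s := by linarith
  refine ⟨1 / (1 - s) ^ 2, by positivity, fun n hn => ?_⟩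
  have hB := one_add_mul_le_pow (a := (1 - s) / s)
    (le_trans (by norm_num : (-2:ℝ) ≤ 0) (div_nonneg hems.le hs0.le)) n
  have h1s : (1 : ℝ) + (1 - s) / s = 1 / s := by field_simp; ring
  rw [h1s, div_pow, one_pow] at hB
  have hspow : (0:ℝ) < s ^ n := pow_pos hs0 n
  have h4 : (1 - s) ≤ (1 - s) / s := by
    rw [le_div_iff₀ hs0]; nlinarith [sq_nonneg (1 - s)]
  have h2 : (n : ℝ) * (1 - s) ≤ 1 / s ^ n := by
    have h5 := mul_le_mul_of_nonneg_left h4 (Nat.cast_nonneg (α := ℝ) n)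
    have h6 : (0:ℝ) ≤ (n:ℝ) * ((1 - s) / s) :=
      mul_nonneg (Nat.cast_nonneg n) (div_nonneg hems.le hs0.le)
    linarith
  have hsn : (n : ℝ) * (1 - s) * s ^ n ≤ 1 := by
    calc (n:ℝ) * (1 - s) * s ^ n ≤ (1 / s ^ n) * s ^ n :=
          mul_le_mul_of_nonneg_right h2 hspow.le
      _ = 1 := by field_simp
  have hrs : r = s ^ 2 := (Real.sq_sqrt h0).symm
  have hn' : (0:ℝ) < n := by exact_mod_cast hn
  have hX0 : (0:ℝ) ≤ (n : ℝ) * (1 - s) * s ^ n :=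
    mul_nonneg (mul_nonneg (Nat.cast_nonneg n) hems.le) hspow.le
  rw [hrs, ← pow_mul, mul_comm 2 n, pow_mul, div_div, le_div_iff₀ (by positivity)]
  nlinarith [mul_le_mul hsn hsn hX0 (by norm_num : (0:ℝ) ≤ 1)]

lemma int_Ioc (n : ℕ) (a b : ℝ) : IntegrableOn (fun t => _root_.sinc t ^ n) (Set.Ioc a b) := by
  apply Measure.integrableOn_of_bounded (M := 1) measure_Ioc_lt_top.ne
    ((_root_.measurable_sinc.pow_const n).aestronglyMeasurable)
  filter_upwards with t
  rw [Real.norm_eq_abs, abs_pow]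
  exact pow_le_one₀ (abs_nonneg _) (_root_.abs_sinc_le_one t)

lemma rpow_neg_two_eq (t : ℝ) (ht : 0 < t) : t ^ (-2:ℝ) = (1 / t) ^ 2 := by
  rw [show (-2:ℝ) = ((-2 : ℤ) : ℝ) by norm_num, Real.rpow_intCast]
  rw [zpow_neg, one_div, inv_pow]
  norm_num

lemma int_Ioi_pi (n : ℕ) (hn : 2 ≤ n) :
    IntegrableOn (fun t => _root_.sinc t ^ n) (Set.Ioi π) := by
  refine Integrable.mono (g := fun t : ℝ => t ^ (-2:ℝ))
    (integrableOn_Ioi_rpow_of_lt (by norm_num) Real.pi_pos)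
    ((_root_.measurable_sinc.pow_const _).aestronglyMeasurable) ?_
  filter_upwards [ae_restrict_mem measurableSet_Ioi] with t ht
  have htπ : π < t := ht
  have ht1 : (1:ℝ) < t := by linarith [Real.pi_gt_three]
  have ht0 : (0:ℝ) < t := by linarith
  rw [Real.norm_eq_abs, Real.norm_eq_abs, abs_pow]
  rw [abs_of_pos (Real.rpow_pos_of_pos ht0 _), rpow_neg_two_eq t ht0]
  calc |_root_.sinc t| ^ n ≤ (1/t) ^ n :=
        pow_le_pow_left₀ (abs_nonneg _) (_root_.abs_sinc_le_inv t ht0) n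
    _ ≤ (1/t) ^ 2 := pow_le_pow_of_le_one (by positivity)
        (by rw [div_le_one ht0]; linarith) hn

lemma int_Ioi_one (n : ℕ) (hn : 2 ≤ n) :
    IntegrableOn (fun t => _root_.sinc t ^ n) (Set.Ioi 1) := by
  have hπ1 : (1:ℝ) ≤ π := by linarith [Real.pi_gt_three]
  rw [← Set.Ioc_union_Ioi_eq_Ioi hπ1]
  exact (int_Ioc n 1 π).union (int_Ioi_pi n hn)

lemma tail_bound (n : ℕ) (hn : 2 ≤ n) :
    |∫ t in Set.Ioi (1:ℝ), _root_.sinc t ^ n| ≤ π * (101/120) ^ n + π * (1/π) ^ n := by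
  have hπ3 : 3 < π := Real.pi_gt_three
  have hπ1 : (1:ℝ) ≤ π := by linarith
  rw [← Set.Ioc_union_Ioi_eq_Ioi hπ1,
    setIntegral_union Set.Ioc_disjoint_Ioi_same measurableSet_Ioi
      (int_Ioc n 1 π) (int_Ioi_pi n hn)]
  have h1 : |∫ t in Set.Ioc (1:ℝ) π, _root_.sinc t ^ n| ≤ π * (101/120) ^ n := by
    have hb : ∀ x ∈ Set.Ioc (1:ℝ) π, ‖_root_.sinc x ^ n‖ ≤ (101/120) ^ n := by
      intro x hx
      rw [Real.norm_eq_abs, abs_pow]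
      apply pow_le_pow_left₀ (abs_nonneg _) _ n
      rw [abs_of_nonneg (_root_.sinc_nonneg x (by linarith [hx.1]) hx.2)]
      exact _root_.sinc_le_const x hx.1.le hx.2
    have := norm_setIntegral_le_of_norm_le_const (μ := volume) measure_Ioc_lt_top hb
    rw [Real.norm_eq_abs] at this
    refine le_trans this ?_
    rw [Real.volume_real_Ioc_of_le (by linarith)]
    have : (101/120:ℝ) ^ n ≥ 0 := by positivity
    nlinarith
  have h2 : |∫ t in Set.Ioi π, _root_.sinc t ^ n| ≤ π * (1/π) ^ n := by
    obtain ⟨m, rfl⟩ : ∃ m, n = m + 2 := ⟨n - 2, by omega⟩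
    have hg : Integrable (fun t : ℝ => (1/π) ^ m * t ^ (-2:ℝ))
        (volume.restrict (Set.Ioi π)) :=
      (integrableOn_Ioi_rpow_of_lt (by norm_num) Real.pi_pos).const_mul _
    have hbd : ∀ᵐ t ∂(volume.restrict (Set.Ioi π)),
        ‖_root_.sinc t ^ (m + 2)‖ ≤ (1/π) ^ m * t ^ (-2:ℝ) := by
      filter_upwards [ae_restrict_mem measurableSet_Ioi] with t ht
      have htπ : π < t := ht
      have ht0 : (0:ℝ) < t := by linarith
      rw [Real.norm_eq_abs, abs_pow, rpow_neg_two_eq t ht0]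
      calc |_root_.sinc t| ^ (m+2) ≤ (1/t) ^ (m+2) :=
            pow_le_pow_left₀ (abs_nonneg _) (_root_.abs_sinc_le_inv t ht0) _
        _ = (1/t) ^ m * (1/t)^2 := by rw [pow_add]
        _ ≤ (1/π) ^ m * (1/t)^2 := by
            apply mul_le_mul_of_nonneg_right _ (by positivity)
            apply pow_le_pow_left₀ (by positivity)
            rw [div_le_div_iff₀ ht0 Real.pi_pos]
            nlinarith
    have hnorm := norm_integral_le_of_norm_le hg hbd
    rw [Real.norm_eq_abs] at hnorm
    refine le_trans hnorm ?_
    rw [integral_const_mul, integral_Ioi_rpow_of_lt (by norm_num) Real.pi_pos]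
    have hπ0 : (0:ℝ) < π := Real.pi_pos
    have : -π ^ (-2 + 1 : ℝ) / (-2 + 1) = 1 / π := by
      rw [show (-2 + 1 : ℝ) = -1 by norm_num, Real.rpow_neg_one]
      field_simp
    rw [this]
    have heq : π * (1/π) ^ (m + 2) = (1/π) ^ m * (1/π) := by
      rw [pow_add]
      field_simp
    rw [heq]
  calc |(∫ t in Set.Ioc (1:ℝ) π, _root_.sinc t ^ n) + ∫ t in Set.Ioi π, _root_.sinc t ^ n|
      ≤ |∫ t in Set.Ioc (1:ℝ) π, _root_.sinc t ^ n| + |∫ t in Set.Ioi π, _root_.sinc t ^ n| :=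
        abs_add_le _ _
    _ ≤ π * (101/120) ^ n + π * (1/π) ^ n := add_le_add h1 h2

set_option maxHeartbeats 1200000 in
lemma main_est (n : ℕ) (hn : 2 ≤ n) :
    |(∫ t in Set.Ioi (0:ℝ), _root_.sinc t ^ n) - Real.sqrt (6 * π / n) / 2| ≤
      11 / Real.sqrt n ^ 3 + (7/2) * Real.exp (-(1/12)) ^ n
        + (π * (101/120) ^ n + π * (1/π) ^ n) := by
  have hπ3 : 3 < π := Real.pi_gt_three
  have hn0 : (0:ℝ) < n := by exact_mod_cast (by omega : 0 < n)
  set b : ℝ := n / 6 with hbdef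
  have hb : 0 < b := by positivity
  have hΦint : Integrable (fun t : ℝ => Real.exp (-b * t ^ 2)) :=
    integrable_exp_neg_mul_sq hb
  have hΦ2int : Integrable (fun t : ℝ => Real.exp (-(b/2) * t ^ 2)) :=
    integrable_exp_neg_mul_sq (by positivity)
  have hG : ∫ t in Set.Ioi (0:ℝ), Real.exp (-b * t ^ 2) = Real.sqrt (π / b) / 2 :=
    integral_gaussian_Ioi b
  have hG2 : ∫ t in Set.Ioi (0:ℝ), Real.exp (-(b/2) * t ^ 2) = Real.sqrt (π / (b/2)) / 2 :=
    integral_gaussian_Ioi _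
  have hΦnn : ∀ t : ℝ, 0 ≤ Real.exp (-b * t ^ 2) := fun t => (Real.exp_pos _).le
  have hΦ2nn : ∀ t : ℝ, 0 ≤ Real.exp (-(b/2) * t ^ 2) := fun t => (Real.exp_pos _).le
  have hexp_eq : ∀ t : ℝ, Real.exp (-(t ^ 2 / 6)) ^ n = Real.exp (-b * t ^ 2) := by
    intro t
    rw [← Real.exp_nat_mul]
    congr 1
    rw [hbdef]
    ring
  have hsplit : (∫ t in Set.Ioi (0:ℝ), _root_.sinc t ^ n) =
      (∫ t in Set.Ioc (0:ℝ) 1, _root_.sinc t ^ n) + ∫ t in Set.Ioi (1:ℝ), _root_.sinc t ^ n := by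
    rw [← setIntegral_union Set.Ioc_disjoint_Ioi_same measurableSet_Ioi
      (int_Ioc n 0 1) (int_Ioi_one n hn), Set.Ioc_union_Ioi_eq_Ioi zero_le_one]
  have htail := tail_bound n hn
  -- upper bound for the main piece
  have hup : (∫ t in Set.Ioc (0:ℝ) 1, _root_.sinc t ^ n) ≤ Real.sqrt (π / b) / 2 := by
    rw [← hG]
    calc (∫ t in Set.Ioc (0:ℝ) 1, _root_.sinc t ^ n)
        ≤ ∫ t in Set.Ioc (0:ℝ) 1, Real.exp (-b * t ^ 2) := by
          apply setIntegral_mono_on (int_Ioc n 0 1) hΦint.integrableOn measurableSet_Ioc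
          intro t ht
          rw [← hexp_eq t]
          exact pow_le_pow_left₀ (_root_.sinc_nonneg t ht.1.le (by linarith [ht.2]))
            (_root_.sinc_le_gauss t ht.1.le ht.2) n
      _ ≤ ∫ t in Set.Ioi (0:ℝ), Real.exp (-b * t ^ 2) :=
          setIntegral_mono_set hΦint.integrableOn (Filter.Eventually.of_forall hΦnn)
            (HasSubset.Subset.eventuallyLE Set.Ioc_subset_Ioi_self)
  -- integrability of the moment integrand
  have hint4 : IntegrableOn (fun t : ℝ => t ^ 4 * Real.exp (-b * t ^ 2))
      (Set.Ioc (0:ℝ) 1) := by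
    apply Measure.integrableOn_of_bounded (M := 1) measure_Ioc_lt_top.ne
      ((by fun_prop : Continuous fun t : ℝ => t ^ 4 * Real.exp (-b * t ^ 2)).aestronglyMeasurable)
    filter_upwards [ae_restrict_mem measurableSet_Ioc] with t ht
    have h1 : |t| ≤ 1 := abs_le.2 ⟨by linarith [ht.1], ht.2⟩
    have h2 : Real.exp (-b * t ^ 2) ≤ 1 := by
      rw [Real.exp_le_one_iff]
      nlinarith [sq_nonneg t]
    rw [Real.norm_eq_abs, abs_mul, abs_pow, abs_of_nonneg (hΦnn t)]
    have h3 : |t| ^ 4 ≤ 1 := pow_le_one₀ (abs_nonneg t) h1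
    nlinarith [pow_nonneg (abs_nonneg t) 4, hΦnn t]
  -- pointwise lower bound
  have hlow_pt : ∀ t ∈ Set.Ioc (0:ℝ) 1,
      Real.exp (-b * t ^ 2) - (n/50) * (t ^ 4 * Real.exp (-b * t ^ 2)) ≤ _root_.sinc t ^ n := by
    intro t ht
    have h01 : (0:ℝ) ≤ t := ht.1.le
    have h11 : t ≤ 1 := ht.2
    have ht4 : t ^ 4 ≤ 1 := pow_le_one₀ h01 h11
    have hBer : (1:ℝ) - n * (t ^ 4 / 50) ≤ (1 - t ^ 4 / 50) ^ n := by
      have h := one_add_mul_le_pow (a := -(t ^ 4 / 50)) (by nlinarith) n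
      calc (1:ℝ) - n * (t ^ 4 / 50) = 1 + n * (-(t ^ 4 / 50)) := by ring
        _ ≤ (1 + -(t ^ 4 / 50)) ^ n := h
        _ = (1 - t ^ 4 / 50) ^ n := by ring_nf
    have hbase := _root_.gauss_le_sinc t h01 h11
    have hbnn : 0 ≤ Real.exp (-(t ^ 2 / 6)) * (1 - t ^ 4 / 50) :=
      mul_nonneg (Real.exp_pos _).le (by nlinarith)
    have hp : (Real.exp (-(t ^ 2 / 6)) * (1 - t ^ 4 / 50)) ^ n ≤ _root_.sinc t ^ n :=
      pow_le_pow_left₀ hbnn hbase n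
    rw [mul_pow, hexp_eq t] at hp
    have hmul : Real.exp (-b * t ^ 2) * (1 - n * (t ^ 4 / 50)) ≤
        Real.exp (-b * t ^ 2) * (1 - t ^ 4 / 50) ^ n :=
      mul_le_mul_of_nonneg_left hBer (hΦnn t)
    calc Real.exp (-b * t ^ 2) - (n/50) * (t ^ 4 * Real.exp (-b * t ^ 2))
        = Real.exp (-b * t ^ 2) * (1 - n * (t ^ 4 / 50)) := by ring
      _ ≤ Real.exp (-b * t ^ 2) * (1 - t ^ 4 / 50) ^ n := hmul
      _ ≤ _root_.sinc t ^ n := hp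
  -- gaussian split
  have hgsplit : (∫ t in Set.Ioc (0:ℝ) 1, Real.exp (-b * t ^ 2)) =
      Real.sqrt (π / b) / 2 - ∫ t in Set.Ioi (1:ℝ), Real.exp (-b * t ^ 2) := by
    have h := setIntegral_union (μ := volume) Set.Ioc_disjoint_Ioi_same measurableSet_Ioi
      (hΦint.integrableOn (s := Set.Ioc (0:ℝ) 1)) (hΦint.integrableOn (s := Set.Ioi (1:ℝ)))
    rw [Set.Ioc_union_Ioi_eq_Ioi zero_le_one, hG] at h
    linarith
  -- gaussian tail bound
  have hgtail : (∫ t in Set.Ioi (1:ℝ), Real.exp (-b * t ^ 2)) ≤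
      Real.exp (-(b/2)) * (Real.sqrt (π / (b/2)) / 2) := by
    calc (∫ t in Set.Ioi (1:ℝ), Real.exp (-b * t ^ 2))
        ≤ ∫ t in Set.Ioi (1:ℝ), Real.exp (-(b/2)) * Real.exp (-(b/2) * t ^ 2) := by
          apply setIntegral_mono_on hΦint.integrableOn
            ((hΦ2int.const_mul _).integrableOn) measurableSet_Ioi
          intro t ht
          rw [← Real.exp_add]
          apply Real.exp_le_exp.2
          have h1 : (1:ℝ) ≤ t ^ 2 := by nlinarith [Set.mem_Ioi.1 ht]
          nlinarith
      _ = Real.exp (-(b/2)) * ∫ t in Set.Ioi (1:ℝ), Real.exp (-(b/2) * t ^ 2) :=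
          integral_const_mul _ _
      _ ≤ Real.exp (-(b/2)) * ∫ t in Set.Ioi (0:ℝ), Real.exp (-(b/2) * t ^ 2) := by
          apply mul_le_mul_of_nonneg_left _ (Real.exp_pos _).le
          exact setIntegral_mono_set hΦ2int.integrableOn
            (Filter.Eventually.of_forall hΦ2nn)
            (HasSubset.Subset.eventuallyLE (Set.Ioi_subset_Ioi zero_le_one))
      _ = Real.exp (-(b/2)) * (Real.sqrt (π / (b/2)) / 2) := by rw [hG2]
  -- moment bound
  have hmom : (∫ t in Set.Ioc (0:ℝ) 1, t ^ 4 * Real.exp (-b * t ^ 2)) ≤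
      (4 / b ^ 2) * (Real.sqrt (π / (b/2)) / 2) := by
    calc (∫ t in Set.Ioc (0:ℝ) 1, t ^ 4 * Real.exp (-b * t ^ 2))
        ≤ ∫ t in Set.Ioc (0:ℝ) 1, (4 / b ^ 2) * Real.exp (-(b/2) * t ^ 2) := by
          apply setIntegral_mono_on hint4
            ((hΦ2int.const_mul _).integrableOn) measurableSet_Ioc
          intro t ht
          have hsq := sq_le_exp (b * t ^ 2 / 2) (by positivity)
          have hkey : Real.exp (b * t ^ 2 / 2) * Real.exp (-b * t ^ 2) =
              Real.exp (-(b/2) * t ^ 2) := by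
            rw [← Real.exp_add]; congr 1; ring
          have h5 : b ^ 2 * t ^ 4 / 4 * Real.exp (-b * t ^ 2) ≤
              Real.exp (b * t ^ 2 / 2) * Real.exp (-b * t ^ 2) :=
            mul_le_mul_of_nonneg_right (by nlinarith) (Real.exp_pos _).le
          rw [hkey] at h5
          calc t ^ 4 * Real.exp (-b * t ^ 2)
              = (4 / b ^ 2) * (b ^ 2 * t ^ 4 / 4 * Real.exp (-b * t ^ 2)) := by
                field_simp
              _ ≤ (4 / b ^ 2) * Real.exp (-(b/2) * t ^ 2) :=
                mul_le_mul_of_nonneg_left h5 (by positivity)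
      _ = (4 / b ^ 2) * ∫ t in Set.Ioc (0:ℝ) 1, Real.exp (-(b/2) * t ^ 2) :=
          integral_const_mul _ _
      _ ≤ (4 / b ^ 2) * ∫ t in Set.Ioi (0:ℝ), Real.exp (-(b/2) * t ^ 2) := by
          apply mul_le_mul_of_nonneg_left _ (by positivity)
          exact setIntegral_mono_set hΦ2int.integrableOn
            (Filter.Eventually.of_forall hΦ2nn)
            (HasSubset.Subset.eventuallyLE Set.Ioc_subset_Ioi_self)
      _ = (4 / b ^ 2) * (Real.sqrt (π / (b/2)) / 2) := by rw [hG2]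
  -- lower bound for the main piece
  have hlo : Real.sqrt (π / b) / 2 - (∫ t in Set.Ioi (1:ℝ), Real.exp (-b * t ^ 2))
      - (n/50) * (∫ t in Set.Ioc (0:ℝ) 1, t ^ 4 * Real.exp (-b * t ^ 2))
      ≤ ∫ t in Set.Ioc (0:ℝ) 1, _root_.sinc t ^ n := by
    have hint_sub : (∫ t in Set.Ioc (0:ℝ) 1,
        (Real.exp (-b * t ^ 2) - (n/50) * (t ^ 4 * Real.exp (-b * t ^ 2)))) =
        (∫ t in Set.Ioc (0:ℝ) 1, Real.exp (-b * t ^ 2)) -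
          (n/50) * ∫ t in Set.Ioc (0:ℝ) 1, t ^ 4 * Real.exp (-b * t ^ 2) := by
      rw [integral_sub hΦint.integrableOn (hint4.const_mul _), integral_const_mul]
    have hintsub : IntegrableOn (fun t : ℝ =>
        Real.exp (-b * t ^ 2) - (n/50) * (t ^ 4 * Real.exp (-b * t ^ 2)))
        (Set.Ioc (0:ℝ) 1) := hΦint.integrableOn.sub (hint4.const_mul _)
    have h := setIntegral_mono_on hintsub (int_Ioc n 0 1)
      measurableSet_Ioc hlow_pt
    rw [hint_sub, hgsplit] at h
    linarith
  -- numeric bounds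
  have hsqn : (0:ℝ) < Real.sqrt n := Real.sqrt_pos.2 hn0
  have hsq1 : (1:ℝ) ≤ Real.sqrt n := by
    rw [show (1:ℝ) = Real.sqrt 1 by rw [Real.sqrt_one]]
    exact Real.sqrt_le_sqrt (by exact_mod_cast hn0)
  have hG2v : Real.sqrt (π / (b/2)) / 2 ≤ 7 / (2 * Real.sqrt n) := by
    have h12 : π / (b/2) = 12 * π / n := by
      rw [hbdef]; field_simp; ring
    rw [h12, Real.sqrt_div (by positivity) _]
    have h49 : Real.sqrt (12 * π) ≤ 7 := by
      rw [show (7:ℝ) = Real.sqrt 49 by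
        rw [show (49:ℝ) = 7 ^ 2 by norm_num, Real.sqrt_sq (by norm_num)]]
      apply Real.sqrt_le_sqrt
      linarith [Real.pi_lt_d2]
    calc Real.sqrt (12 * π) / Real.sqrt n / 2
        = Real.sqrt (12 * π) / (2 * Real.sqrt n) := by ring
      _ ≤ 7 / (2 * Real.sqrt n) := by gcongr
  have hexp2 : Real.exp (-(b/2)) = Real.exp (-(1/12)) ^ n := by
    rw [← Real.exp_nat_mul]; congr 1; rw [hbdef]; ring
  have hgtail' : (∫ t in Set.Ioi (1:ℝ), Real.exp (-b * t ^ 2)) ≤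
      (7/2) * Real.exp (-(1/12)) ^ n := by
    have h1 := mul_le_mul_of_nonneg_left hG2v (Real.exp_pos (-(b/2))).le
    have h2 : Real.exp (-(b/2)) * (7 / (2 * Real.sqrt n)) ≤ Real.exp (-(b/2)) * (7/2) := by
      apply mul_le_mul_of_nonneg_left _ (Real.exp_pos _).le
      rw [div_le_div_iff₀ (by positivity) (by norm_num)]
      nlinarith
    calc (∫ t in Set.Ioi (1:ℝ), Real.exp (-b * t ^ 2)) ≤ _ := hgtail
      _ ≤ _ := h1
      _ ≤ Real.exp (-(b/2)) * (7/2) := h2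
      _ = (7/2) * Real.exp (-(1/12)) ^ n := by rw [hexp2]; ring
  have hmom' : (n/50 : ℝ) * (∫ t in Set.Ioc (0:ℝ) 1, t ^ 4 * Real.exp (-b * t ^ 2)) ≤
      11 / Real.sqrt n ^ 3 := by
    have hmomnn : (0:ℝ) ≤ (n/50 : ℝ) := by positivity
    have h1 : (n/50 : ℝ) * (∫ t in Set.Ioc (0:ℝ) 1, t ^ 4 * Real.exp (-b * t ^ 2)) ≤
        (n/50) * ((4 / b ^ 2) * (7 / (2 * Real.sqrt n))) := by
      apply mul_le_mul_of_nonneg_left _ hmomnn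
      calc (∫ t in Set.Ioc (0:ℝ) 1, t ^ 4 * Real.exp (-b * t ^ 2)) ≤ _ := hmom
        _ ≤ (4 / b ^ 2) * (7 / (2 * Real.sqrt n)) :=
          mul_le_mul_of_nonneg_left hG2v (by positivity)
    have hnn : (n:ℝ) = Real.sqrt n ^ 2 := (Real.sq_sqrt hn0.le).symm
    have h2 : (n/50 : ℝ) * ((4 / b ^ 2) * (7 / (2 * Real.sqrt n))) =
        (252/25) / Real.sqrt n ^ 3 := by
      rw [hbdef]
      field_simp
      linear_combination (-25200) * hnn
    rw [h2] at h1
    have h3 : (0:ℝ) < Real.sqrt n ^ 3 := pow_pos hsqn 3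
    have h4 : (252/25 : ℝ) / Real.sqrt n ^ 3 ≤ 11 / Real.sqrt n ^ 3 := by
      rw [div_le_div_iff₀ h3 h3]
      nlinarith
    linarith
  -- assemble
  have hπb : Real.sqrt (6 * π / n) = Real.sqrt (π / b) := by
    rw [hbdef]
    congr 1
    rw [div_div_eq_mul_div]
    ring
  rw [hπb, abs_sub_le_iff]
  have tnn1 : (0:ℝ) ≤ 11 / Real.sqrt n ^ 3 := by positivity
  have tnn2 : (0:ℝ) ≤ (7/2) * Real.exp (-(1/12)) ^ n := by positivity
  have tnn3 : (0:ℝ) ≤ π * (101/120) ^ n + π * (1/π) ^ n := by positivity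
  have htl := abs_le.1 htail
  constructor
  · rw [hsplit]
    linarith [hup, htl.2]
  · rw [hsplit]
    linarith [hlo, hgtail', hmom', htl.1]

set_option maxHeartbeats 1600000 in
/-- Laplace's estimate: `(2/π) ∫_0^∞ _root_.sinc^{k+1}(t) dt = √(6/(πk)) + O(k^{-3/2})`. -/
theorem sinc_integral_estimate :
    ∃ C > (0 : ℝ), ∃ K : ℕ, ∀ k : ℕ, K ≤ k →
      |(2 / π) * (∫ t in Set.Ioi (0 : ℝ), _root_.sinc t ^ (k + 1)) -
          Real.sqrt (6 / (π * k))| ≤ C / (k : ℝ) ^ ((3 : ℝ) / 2) := by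
  have hπ3 : 3 < π := Real.pi_gt_three
  have hπ0 : (0:ℝ) < π := Real.pi_pos
  obtain ⟨C₁, hC₁, hC₁'⟩ := geom_small (r := Real.exp (-(1/12))) (Real.exp_pos _).le
    (by rw [Real.exp_lt_one_iff]; norm_num)
  obtain ⟨C₂, hC₂, hC₂'⟩ := geom_small (r := (101/120:ℝ)) (by norm_num) (by norm_num)
  obtain ⟨C₃, hC₃, hC₃'⟩ := geom_small (r := (1/π)) (by positivity)
    (by rw [div_lt_one hπ0]; linarith)
  refine ⟨13 + (7/2) * C₁ + π * C₂ + π * C₃, by positivity, 2, fun k hk => ?_⟩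
  set n := k + 1 with hndef
  have hn : 2 ≤ n := by omega
  have hk0 : (0:ℝ) < k := by exact_mod_cast (by omega : 0 < k)
  have hk1 : (1:ℝ) ≤ k := by exact_mod_cast (by omega : 1 ≤ k)
  have hkn : (k:ℝ) ≤ n := by exact_mod_cast (by omega : k ≤ n)
  have hn0 : (0:ℝ) < n := by linarith
  set s := Real.sqrt k with hsdef
  have hs0 : 0 < s := Real.sqrt_pos.2 hk0
  have hs1 : 1 ≤ s := by
    rw [hsdef, show (1:ℝ) = Real.sqrt 1 by rw [Real.sqrt_one]]
    exact Real.sqrt_le_sqrt hk1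
  have hs2 : s ^ 2 = k := Real.sq_sqrt hk0.le
  have hs3 : (0:ℝ) < s ^ 3 := pow_pos hs0 3
  have hme := main_est n hn
  -- identification of the main term
  have hid : (2/π) * (Real.sqrt (6 * π / n) / 2) = Real.sqrt (6 / (π * n)) := by
    rw [show (6:ℝ) * π / n = (6 / (π * n)) * π ^ 2 by field_simp]
    rw [Real.sqrt_mul (by positivity) (π ^ 2), Real.sqrt_sq hπ0.le]
    field_simp
  -- difference of square roots
  set a := Real.sqrt (6 / (π * k)) with hadef
  set c := Real.sqrt (6 / (π * n)) with hcdef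
  have hca : c ≤ a := by
    apply Real.sqrt_le_sqrt
    rw [div_le_div_iff₀ (by positivity) (by positivity)]
    nlinarith
  have ha0 : 0 ≤ a := Real.sqrt_nonneg _
  have hc0 : 0 ≤ c := Real.sqrt_nonneg _
  have ha2 : a ^ 2 * (π * k) = 6 := by
    rw [hadef, Real.sq_sqrt (by positivity)]
    field_simp
  have hc2 : c ^ 2 * (π * (k + 1)) = 6 := by
    rw [hcdef, Real.sq_sqrt (by positivity)]
    push_cast [hndef]
    field_simp
  have hsa : 1 ≤ s * a := by
    have h1 : (1:ℝ)/k ≤ 6/(π*k) := by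
      rw [div_le_div_iff₀ hk0 (by positivity)]
      have hp4 : π < 3.15 := Real.pi_lt_d2
      nlinarith [mul_pos (show (0:ℝ) < 6 - π by linarith) hk0]
    have h2 : Real.sqrt (1/(k:ℝ)) ≤ a := Real.sqrt_le_sqrt h1
    have h3 : Real.sqrt (1/(k:ℝ)) = 1/s := by
      rw [hsdef, one_div, one_div, Real.sqrt_inv]
    rw [h3, div_le_iff₀ hs0] at h2
    linarith [h2]
  have hdiff : a - c ≤ 2 / s ^ 3 := by
    have h1 : a - c ≤ s * (a ^ 2 - c ^ 2) := by
      nlinarith [mul_nonneg (sub_nonneg.2 hca)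
        (show 0 ≤ s * (a + c) - 1 by nlinarith [mul_nonneg hs0.le hc0])]
    have h5 : (k:ℝ) ^ 2 * (a ^ 2 - c ^ 2) * (π * (k + 1)) = 6 * k := by
      linear_combination ((k:ℝ) * (k + 1)) * ha2 - (k:ℝ) ^ 2 * hc2
    have h7 : 3 * ((k:ℝ) + 1) ≤ π * (k + 1) := by nlinarith
    have h6 : (k:ℝ) ^ 2 * (a ^ 2 - c ^ 2) ≤ 2 := by nlinarith [h5, h7, hk0]
    have hs4 : s ^ 4 = (k:ℝ) ^ 2 := by rw [← hs2]; ring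
    have h4 : (a - c) * s ^ 3 ≤ 2 := by
      have h8 := mul_le_mul_of_nonneg_right h1 hs3.le
      calc (a - c) * s ^ 3 ≤ s * (a ^ 2 - c ^ 2) * s ^ 3 := h8
        _ = s ^ 4 * (a ^ 2 - c ^ 2) := by ring
        _ = (k:ℝ) ^ 2 * (a ^ 2 - c ^ 2) := by rw [hs4]
        _ ≤ 2 := h6
    rw [le_div_iff₀ hs3]
    exact h4
  -- comparing n-denominators with k-denominators
  have hsn : s ≤ Real.sqrt n := Real.sqrt_le_sqrt hkn
  have hn3 : (0:ℝ) < Real.sqrt n ^ 3 := pow_pos (Real.sqrt_pos.2 hn0) 3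
  have hsn3 : s ^ 3 ≤ Real.sqrt n ^ 3 := pow_le_pow_left₀ hs0.le hsn 3
  have t1 : 11 / Real.sqrt n ^ 3 ≤ 11 / s ^ 3 := by
    rw [div_le_div_iff₀ hn3 hs3]
    nlinarith
  have geomc : ∀ (r C : ℝ), 0 ≤ r → r ≤ 1 → 0 < C →
      (∀ m : ℕ, 1 ≤ m → r ^ m ≤ C / (m:ℝ) ^ 2) → r ^ n ≤ C / s ^ 3 := by
    intro r C hr0 hr1 hCpos hC
    have h1 : r ^ n ≤ r ^ k := pow_le_pow_of_le_one hr0 hr1 (by omega)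
    have h2 : r ^ k ≤ C / (k:ℝ) ^ 2 := hC k (by omega)
    have hs4 : s ^ 4 = (k:ℝ) ^ 2 := by rw [← hs2]; ring
    have h3 : C / (k:ℝ) ^ 2 ≤ C / s ^ 3 := by
      rw [div_le_div_iff₀ (by positivity) hs3]
      nlinarith [mul_nonneg (mul_nonneg hCpos.le hs3.le) (sub_nonneg.2 hs1)]
    linarith
  have g1 : Real.exp (-(1/12)) ^ n ≤ C₁ / s ^ 3 :=
    geomc _ _ (Real.exp_pos _).le (by rw [← Real.exp_zero]; apply Real.exp_le_exp.2; norm_num)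
      hC₁ hC₁'
  have g2 : (101/120:ℝ) ^ n ≤ C₂ / s ^ 3 := geomc _ _ (by norm_num) (by norm_num) hC₂ hC₂'
  have g3 : (1/π) ^ n ≤ C₃ / s ^ 3 := geomc _ _ (by positivity)
    (by rw [div_le_one hπ0]; linarith) hC₃ hC₃'
  -- assemble
  have h2π0 : (0:ℝ) < 2/π := by positivity
  have h2π1 : 2/π ≤ 1 := by rw [div_le_one hπ0]; linarith
  have habs : |(∫ t in Set.Ioi (0:ℝ), _root_.sinc t ^ n) - Real.sqrt (6 * π / n) / 2| ≥ 0 :=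
    abs_nonneg _
  have hfirst : |(2/π) * (∫ t in Set.Ioi (0:ℝ), _root_.sinc t ^ n)
      - (2/π) * (Real.sqrt (6 * π / n) / 2)| ≤
      11 / s ^ 3 + (7/2) * (C₁ / s ^ 3) + π * (C₂ / s ^ 3) + π * (C₃ / s ^ 3) := by
    rw [← mul_sub, abs_mul, abs_of_pos h2π0]
    have step : (2/π) * |(∫ t in Set.Ioi (0:ℝ), _root_.sinc t ^ n)
        - Real.sqrt (6 * π / n) / 2| ≤ 1 * |(∫ t in Set.Ioi (0:ℝ), _root_.sinc t ^ n)
        - Real.sqrt (6 * π / n) / 2| := mul_le_mul_of_nonneg_right h2π1 habs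
    rw [one_mul] at step
    have hbound : |(∫ t in Set.Ioi (0:ℝ), _root_.sinc t ^ n) - Real.sqrt (6 * π / n) / 2| ≤
        11 / s ^ 3 + (7/2) * (C₁ / s ^ 3) + π * (C₂ / s ^ 3) + π * (C₃ / s ^ 3) := by
      refine le_trans hme ?_
      have b1 := t1
      have b2 : (7/2) * Real.exp (-(1/12)) ^ n ≤ (7/2) * (C₁ / s ^ 3) := by linarith [g1]
      have b3 : π * (101/120:ℝ) ^ n ≤ π * (C₂ / s ^ 3) := by nlinarith [g2]
      have b4 : π * (1/π) ^ n ≤ π * (C₃ / s ^ 3) := by nlinarith [g3]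
      linarith
    linarith
  have hsecond : |(2/π) * (Real.sqrt (6 * π / n) / 2) - a| ≤ 2 / s ^ 3 := by
    rw [hid, abs_sub_comm, abs_of_nonneg (sub_nonneg.2 hca)]
    exact hdiff
  have hk32 : (k:ℝ) ^ ((3:ℝ)/2) = s ^ 3 := by
    rw [hsdef, show ((3:ℝ)/2) = (1/2) * 3 by norm_num,
      Real.rpow_mul (Nat.cast_nonneg k), ← Real.sqrt_eq_rpow,
      show (3:ℝ) = ((3:ℕ):ℝ) by norm_num, Real.rpow_natCast]
  rw [hk32]
  calc |(2/π) * (∫ t in Set.Ioi (0:ℝ), _root_.sinc t ^ n) - a|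
      ≤ |(2/π) * (∫ t in Set.Ioi (0:ℝ), _root_.sinc t ^ n)
          - (2/π) * (Real.sqrt (6 * π / n) / 2)|
        + |(2/π) * (Real.sqrt (6 * π / n) / 2) - a| := abs_sub_le _ _ _
    _ ≤ (11 / s ^ 3 + (7/2) * (C₁ / s ^ 3) + π * (C₂ / s ^ 3) + π * (C₃ / s ^ 3))
        + 2 / s ^ 3 := add_le_add hfirst hsecond
    _ = (13 + (7/2) * C₁ + π * C₂ + π * C₃) / s ^ 3 := by
        field_simp
        ring
end
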